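/- Let X be a separable real Banach space, and let Q : X → [0,+∞) be a real analytic, Lipschitz function with inf{Q(x) : ‖x‖ ≥ 1} > 0 = Q(0) (as constructed from a separating polynomial). Let r > 0, ε ∈ (0,1), and let {x_j} be a sequence in X with X = ⋃_{j=1}^∞ D_Q(x_j, r). Then there exists a sequence of real analytic functions φ_n : X → ℝ, n ∈ ℕ, such that: (1) each φ_n is Lipschitz with Lip(φ_n) ≤ 2·Lip(Q)/r; (2) 0 ≤ φ_n(x) ≤ 1 + ε for all x ∈ X and all n; (3) for each x ∈ X there exists m ∈ ℕ with φ_m(x) > 1; (4) 0 ≤ φ_n(x) ≤ ε for all x ∈ X \ D_Q(x_n, 4r); and (4′) ‖φ_n′(x)‖ ≤ ε for all x ∈ X \ D_Q(x_n, 5r). -/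

import Mathlib

open scoped NNReal

/-- The least Lipschitz constant of a map. -/
noncomputable def lipConst {α β : Type*} [PseudoEMetricSpace α] [PseudoEMetricSpace β]
    (f : α → β) : ℝ≥0 :=
  sInf {K : ℝ≥0 | LipschitzWith K f}

/-- softplus -/
noncomputable def sp (x : ℝ) : ℝ := Real.log (1 + Real.exp x)

/-- sigmoid -/
noncomputable def sg (x : ℝ) : ℝ := Real.exp x / (1 + Real.exp x)

lemma one_add_exp_pos (x : ℝ) : (0:ℝ) < 1 + Real.exp x := by positivity

lemma sp_nonneg (x : ℝ) : 0 ≤ sp x :=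
  Real.log_nonneg (by nlinarith [Real.exp_pos x])

lemma sp_mono {a b : ℝ} (h : a ≤ b) : sp a ≤ sp b :=
  Real.log_le_log (one_add_exp_pos a) (by nlinarith [Real.exp_le_exp.2 h])

lemma sp_le_exp (x : ℝ) : sp x ≤ Real.exp x := by
  have := Real.log_le_sub_one_of_pos (one_add_exp_pos x)
  simpa [sp] using this

lemma sp_eq (x : ℝ) : sp x = x + sp (-x) := by
  have h : (1:ℝ) + Real.exp x = Real.exp x * (1 + Real.exp (-x)) := by
    rw [mul_add, mul_one, ← Real.exp_add]
    simp [add_comm]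
  rw [sp, sp, h, Real.log_mul (Real.exp_ne_zero x) (ne_of_gt (one_add_exp_pos (-x))),
    Real.log_exp]

lemma sp_sub_le {a b : ℝ} (h : a ≤ b) : sp b - sp a ≤ b - a := by
  have ha := sp_eq a
  have hb := sp_eq b
  have : sp (-b) ≤ sp (-a) := sp_mono (by linarith)
  linarith

lemma sg_nonneg (x : ℝ) : 0 ≤ sg x := by
  exact div_nonneg (Real.exp_pos x).le (one_add_exp_pos x).le

lemma sg_le_one (x : ℝ) : sg x ≤ 1 := by
  rw [sg, div_le_one (one_add_exp_pos x)]
  linarith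

lemma sg_mono {a b : ℝ} (h : a ≤ b) : sg a ≤ sg b := by
  rw [sg, sg, div_le_div_iff₀ (one_add_exp_pos a) (one_add_exp_pos b)]
  nlinarith [Real.exp_le_exp.2 h, Real.exp_pos a, Real.exp_pos b]

lemma sg_le_exp (x : ℝ) : sg x ≤ Real.exp x := by
  rw [sg, div_le_iff₀ (one_add_exp_pos x)]
  nlinarith [Real.exp_pos x]

lemma hasDerivAt_sp (x : ℝ) :
    HasDerivAt sp (sg x) x := by
  have h1 : HasDerivAt (fun y : ℝ => 1 + Real.exp y) (Real.exp x) x :=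
    (Real.hasDerivAt_exp x).const_add 1
  exact h1.log (ne_of_gt (one_add_exp_pos x))

lemma analyticAt_log_pos {x : ℝ} (hx : 0 < x) : AnalyticAt ℝ Real.log x := by
  have h1 : AnalyticAt ℂ Complex.log (x : ℂ) :=
    analyticAt_clog (Complex.ofReal_mem_slitPlane.2 hx)
  have h1' : AnalyticAt ℝ Complex.log (x : ℂ) := by
    obtain ⟨p, hp⟩ := h1
    exact ⟨p.restrictScalars ℝ, hp.restrictScalars⟩
  have h2 : AnalyticAt ℝ (fun t : ℝ => Complex.log (t : ℂ)) x :=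
    h1'.comp (Complex.ofRealCLM.analyticAt x)
  have h3 : AnalyticAt ℝ (fun t : ℝ => (Complex.log (t : ℂ)).re) x :=
    (Complex.reCLM.analyticAt _).comp h2
  have he : (fun t : ℝ => (Complex.log (t : ℂ)).re) = Real.log :=
    funext fun t => Complex.log_ofReal_re t
  rwa [he] at h3

lemma analyticAt_sp (x : ℝ) : AnalyticAt ℝ sp x := by
  have h1 : AnalyticAt ℝ (fun y : ℝ => 1 + Real.exp y) x :=
    analyticAt_const.add analyticAt_rexp
  exact AnalyticAt.comp (f := fun y : ℝ => 1 + Real.exp y)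
    (analyticAt_log_pos (one_add_exp_pos x)) h1

/-- the smoothed ramp -/
noncomputable def ramp (m β t0 t1 t : ℝ) : ℝ :=
  m / β * (sp (β * (t1 - t)) - sp (β * (t0 - t)))

lemma hasDerivAt_ramp (m β t0 t1 t : ℝ) (hβ : β ≠ 0) :
    HasDerivAt (ramp m β t0 t1)
      (m * (sg (β * (t0 - t)) - sg (β * (t1 - t)))) t := by
  have inner : ∀ c : ℝ, HasDerivAt (fun s : ℝ => β * (c - s)) (β * (-1)) t := fun c =>
    ((hasDerivAt_id t).const_sub c).const_mul β
  have h1 : HasDerivAt (fun s : ℝ => sp (β * (t1 - s))) (sg (β * (t1 - t)) * (β * (-1))) t :=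
    (hasDerivAt_sp _).comp t (inner t1)
  have h0 : HasDerivAt (fun s : ℝ => sp (β * (t0 - s))) (sg (β * (t0 - t)) * (β * (-1))) t :=
    (hasDerivAt_sp _).comp t (inner t0)
  have := (h1.sub h0).const_mul (m / β)
  refine this.congr_deriv ?_
  rw [div_mul_eq_mul_div, div_eq_iff hβ]
  ring

lemma analyticAt_ramp (m β t0 t1 t : ℝ) : AnalyticAt ℝ (ramp m β t0 t1) t := by
  have i1 : AnalyticAt ℝ (fun s : ℝ => sp (β * (t1 - s))) t :=
    AnalyticAt.comp (f := fun s : ℝ => β * (t1 - s)) (analyticAt_sp _)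
      (analyticAt_const.mul (analyticAt_const.sub analyticAt_id))
  have i0 : AnalyticAt ℝ (fun s : ℝ => sp (β * (t0 - s))) t :=
    AnalyticAt.comp (f := fun s : ℝ => β * (t0 - s)) (analyticAt_sp _)
      (analyticAt_const.mul (analyticAt_const.sub analyticAt_id))
  exact analyticAt_const.mul (i1.sub i0)

lemma ramp_nonneg (m β t0 t1 t : ℝ) (hm : 0 ≤ m) (hβ : 0 < β) (h01 : t0 ≤ t1) :
    0 ≤ ramp m β t0 t1 t := by
  have h1 : sp (β * (t0 - t)) ≤ sp (β * (t1 - t)) := sp_mono (by nlinarith)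
  have h0 : 0 ≤ m / β := by positivity
  exact mul_nonneg h0 (by linarith)

lemma ramp_le (m β t0 t1 t : ℝ) (hm : 0 ≤ m) (hβ : 0 < β) (h01 : t0 ≤ t1) :
    ramp m β t0 t1 t ≤ m * (t1 - t0) := by
  have h1 : sp (β * (t1 - t)) - sp (β * (t0 - t)) ≤ β * (t1 - t) - β * (t0 - t) :=
    sp_sub_le (by nlinarith)
  have h2 : ramp m β t0 t1 t ≤ m / β * (β * (t1 - t) - β * (t0 - t)) :=
    mul_le_mul_of_nonneg_left h1 (by positivity)
  have h3 : m / β * (β * (t1 - t) - β * (t0 - t)) = m * (t1 - t0) := by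
    field_simp
    ring
  linarith

lemma ramp_ge (m β t0 t1 t c : ℝ) (hm : 0 ≤ m) (hβ : 0 < β)
    (hc : c ≤ β * (t0 - t)) :
    m * (t1 - t0) - m / β * Real.exp (-c) ≤ ramp m β t0 t1 t := by
  have e1 := sp_eq (β * (t1 - t))
  have e0 := sp_eq (β * (t0 - t))
  have h1 : 0 ≤ sp (-(β * (t1 - t))) := sp_nonneg _
  have h2 : sp (-(β * (t0 - t))) ≤ Real.exp (-c) :=
    le_trans (sp_mono (by linarith)) (sp_le_exp _)
  have key : (β * (t1 - t) - β * (t0 - t)) - Real.exp (-c) ≤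
      sp (β * (t1 - t)) - sp (β * (t0 - t)) := by linarith
  have h3 : m / β * ((β * (t1 - t) - β * (t0 - t)) - Real.exp (-c)) ≤ ramp m β t0 t1 t :=
    mul_le_mul_of_nonneg_left key (by positivity)
  have h4 : m / β * ((β * (t1 - t) - β * (t0 - t)) - Real.exp (-c)) =
      m * (t1 - t0) - m / β * Real.exp (-c) := by
    field_simp
    ring
  linarith

lemma ramp_tail (m β t0 t1 t c : ℝ) (hm : 0 ≤ m) (hβ : 0 < β)
    (hc : β * (t1 - t) ≤ -c) :
    ramp m β t0 t1 t ≤ m / β * Real.exp (-c) := by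
  have h0 : 0 ≤ sp (β * (t0 - t)) := sp_nonneg _
  have h1 : sp (β * (t1 - t)) ≤ Real.exp (-c) :=
    le_trans (sp_mono hc) (sp_le_exp _)
  exact mul_le_mul_of_nonneg_left (by linarith) (by positivity)

lemma dr_abs_le (m a0 a1 : ℝ) (hm : 0 ≤ m) : |m * (sg a0 - sg a1)| ≤ m := by
  rw [abs_mul, abs_of_nonneg hm]
  have h1 : |sg a0 - sg a1| ≤ 1 := by
    rw [abs_le]
    constructor <;> nlinarith [sg_nonneg a0, sg_nonneg a1, sg_le_one a0, sg_le_one a1]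
  nlinarith

lemma dr_tail (m a0 a1 : ℝ) (hm : 0 ≤ m) (h : a0 ≤ a1) :
    |m * (sg a0 - sg a1)| ≤ m * Real.exp a1 := by
  have hs := sg_mono h
  rw [abs_mul, abs_of_nonneg hm, abs_of_nonpos (by linarith : sg a0 - sg a1 ≤ 0)]
  have h2 : -(sg a0 - sg a1) ≤ Real.exp a1 := by
    nlinarith [sg_nonneg a0, sg_le_exp a1]
  exact mul_le_mul_of_nonneg_left h2 hm

set_option maxHeartbeats 2000000 in
theorem stmt9 (X : Type*) [NormedAddCommGroup X] [NormedSpace ℝ X] [CompleteSpace X]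
    [TopologicalSpace.SeparableSpace X]
    (Q : X → ℝ) (hQnonneg : ∀ x, 0 ≤ Q x) (hQan : ∀ x, AnalyticAt ℝ Q x)
    (hQlip : ∃ K : ℝ≥0, LipschitzWith K Q)
    (hQsep : ∃ c : ℝ, 0 < c ∧ ∀ x : X, 1 ≤ ‖x‖ → c ≤ Q x) (hQ0 : Q 0 = 0)
    (r : ℝ) (hr : 0 < r) (ε : ℝ) (hε : ε ∈ Set.Ioo (0 : ℝ) 1)
    (xs : ℕ → X) (hcover : ∀ y : X, ∃ j : ℕ, Q (y - xs j) < r) :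
    ∃ φ : ℕ → X → ℝ,
      (∀ n, ∀ x, AnalyticAt ℝ (φ n) x) ∧
      (∀ n, (∃ K : ℝ≥0, LipschitzWith K (φ n)) ∧
        (lipConst (φ n) : ℝ) ≤ 2 * (lipConst Q : ℝ) / r) ∧
      (∀ n x, 0 ≤ φ n x ∧ φ n x ≤ 1 + ε) ∧
      (∀ x : X, ∃ m : ℕ, 1 < φ m x) ∧
      (∀ n, ∀ x : X, ¬ Q (x - xs n) < 4 * r → φ n x ≤ ε) ∧
      (∀ n, ∀ x : X, ¬ Q (x - xs n) < 5 * r → ‖fderiv ℝ (φ n) x‖ ≤ ε) := by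
  obtain ⟨ε0, ε1⟩ := hε
  obtain ⟨K, hK⟩ := hQlip
  have hKpos : (0:ℝ) ≤ (K:ℝ) := K.coe_nonneg
  set m : ℝ := (1 + ε/2) / (2*r) with hm_def
  have hm : 0 < m := by positivity
  set δ : ℝ := min (ε/(4*m)) (ε/(m*((K:ℝ)+1))) with hδ_def
  have hδ : 0 < δ := lt_min (by positivity) (by positivity)
  have hδ1 : δ ≤ ε/(4*m) := min_le_left _ _
  have hδ2 : δ ≤ ε/(m*((K:ℝ)+1)) := min_le_right _ _
  set β : ℝ := max 1 ((2/r) * Real.log (1/δ)) with hβ_def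
  have hβ1 : (1:ℝ) ≤ β := le_max_left _ _
  have hβ : (0:ℝ) < β := lt_of_lt_of_le one_pos hβ1
  have hexp : Real.exp (-(β*r/2)) ≤ δ := by
    have h2 : (2/r) * Real.log (1/δ) ≤ β := le_max_right _ _
    have h3 : Real.log (1/δ) ≤ β * r / 2 := by
      have hmul := mul_le_mul_of_nonneg_right h2 (le_of_lt (by positivity : (0:ℝ) < r/2))
      have hid : (2/r) * Real.log (1/δ) * (r/2) = Real.log (1/δ) := by
        field_simp
      nlinarith
    have h4 : -(β*r/2) ≤ Real.log δ := by
      rw [one_div, Real.log_inv] at h3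
      linarith
    calc Real.exp (-(β*r/2)) ≤ Real.exp (Real.log δ) := Real.exp_le_exp.2 h4
      _ = δ := Real.exp_log hδ
  set t0 : ℝ := 3*r/2 with ht0_def
  set t1 : ℝ := 7*r/2 with ht1_def
  have h01 : t0 ≤ t1 := by rw [ht0_def, ht1_def]; linarith
  have hm2r : m * (t1 - t0) = 1 + ε/2 := by
    rw [hm_def, ht0_def, ht1_def]
    field_simp
    ring
  -- pointwise bounds
  have B1 : ∀ t : ℝ, 0 ≤ ramp m β t0 t1 t := fun t =>
    ramp_nonneg m β t0 t1 t hm.le hβ h01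
  have B2 : ∀ t : ℝ, ramp m β t0 t1 t ≤ 1 + ε/2 := fun t => by
    have := ramp_le m β t0 t1 t hm.le hβ h01
    linarith
  have Btail : ∀ b : ℝ, b ≤ ε/(4*m) → m / β * b ≤ ε/4 := by
    intro b hb
    have h1 : m / β * b ≤ m / β * (ε/(4*m)) :=
      mul_le_mul_of_nonneg_left hb (by positivity)
    have h2 : m / β * (ε/(4*m)) = ε/(4*β) := by
      field_simp
    have h3 : ε/(4*β) ≤ ε/4 := by
      rw [div_le_div_iff₀ (by positivity) (by norm_num)]
      nlinarith
    linarith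
  have B3 : ∀ t : ℝ, t < r → 1 < ramp m β t0 t1 t := by
    intro t ht
    have hge := ramp_ge m β t0 t1 t (β*r/2) hm.le hβ (by rw [ht0_def]; nlinarith)
    have h1 : m / β * Real.exp (-(β*r/2)) ≤ ε/4 :=
      Btail _ (le_trans hexp hδ1)
    rw [hm2r] at hge
    linarith
  have B4 : ∀ t : ℝ, 4*r ≤ t → ramp m β t0 t1 t ≤ ε := by
    intro t ht
    have htail := ramp_tail m β t0 t1 t (β*r/2) hm.le hβ (by rw [ht1_def]; nlinarith)
    have h1 : m / β * Real.exp (-(β*r/2)) ≤ ε/4 :=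
      Btail _ (le_trans hexp hδ1)
    linarith
  have B5 : ∀ t : ℝ, 5*r ≤ t →
      |m * (sg (β * (t0 - t)) - sg (β * (t1 - t)))| ≤ ε/((K:ℝ)+1) := by
    intro t ht
    have h1 := dr_tail m (β * (t0 - t)) (β * (t1 - t)) hm.le (by nlinarith)
    have h2 : Real.exp (β * (t1 - t)) ≤ Real.exp (-(β*r/2)) :=
      Real.exp_le_exp.2 (by rw [ht1_def]; nlinarith)
    have h3 : m * Real.exp (β * (t1 - t)) ≤ m * δ := by
      have := le_trans h2 hexp
      exact mul_le_mul_of_nonneg_left this hm.le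
    have h4 : m * δ ≤ ε/((K:ℝ)+1) := by
      have := mul_le_mul_of_nonneg_left hδ2 hm.le
      have hid : m * (ε/(m*((K:ℝ)+1))) = ε/((K:ℝ)+1) := by
        field_simp
      linarith
    linarith
  -- the functions
  refine ⟨fun n x => ramp m β t0 t1 (Q (x - xs n)), ?_, ?_, ?_, ?_, ?_, ?_⟩
  · intro n x
    exact AnalyticAt.comp (f := fun y : X => Q (y - xs n)) (analyticAt_ramp m β t0 t1 _)
      (AnalyticAt.comp (f := fun y : X => y - xs n) (hQan _)
        (analyticAt_id.sub analyticAt_const))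
  · intro n
    have hramp_lip : LipschitzWith m.toNNReal (ramp m β t0 t1) := by
      apply lipschitzWith_of_nnnorm_deriv_le
      · intro t
        exact (hasDerivAt_ramp m β t0 t1 t hβ.ne').differentiableAt
      · intro t
        rw [(hasDerivAt_ramp m β t0 t1 t hβ.ne').deriv]
        rw [← NNReal.coe_le_coe, coe_nnnorm, Real.norm_eq_abs,
          Real.coe_toNNReal _ hm.le]
        exact dr_abs_le m _ _ hm.le
    have hsub : LipschitzWith 1 (fun x : X => x - xs n) :=
      LipschitzWith.of_dist_le_mul fun a b => by
        simp [dist_sub_right]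
    have hφlip : ∀ K' : ℝ≥0, LipschitzWith K' Q →
        LipschitzWith (m.toNNReal * K') (fun x : X => ramp m β t0 t1 (Q (x - xs n))) := by
      intro K' hK'
      have := (hramp_lip.comp hK').comp hsub
      simpa [mul_one, mul_assoc, Function.comp_def] using this
    refine ⟨⟨m.toNNReal * K, hφlip K hK⟩, ?_⟩
    have hmne : m.toNNReal ≠ 0 := ne_of_gt (Real.toNNReal_pos.2 hm)
    have key1 : lipConst (fun x : X => ramp m β t0 t1 (Q (x - xs n))) / m.toNNReal ≤
        lipConst Q := by
      apply le_csInf ⟨K, hK⟩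
      intro K' hK'
      rw [div_le_iff₀ (pos_iff_ne_zero.2 hmne)]
      calc lipConst (fun x : X => ramp m β t0 t1 (Q (x - xs n)))
          ≤ m.toNNReal * K' := csInf_le (OrderBot.bddBelow _) (hφlip K' hK')
        _ = K' * m.toNNReal := mul_comm _ _
    have key2 : lipConst (fun x : X => ramp m β t0 t1 (Q (x - xs n))) ≤
        lipConst Q * m.toNNReal := (div_le_iff₀ (pos_iff_ne_zero.2 hmne)).1 key1
    have key3 : (lipConst (fun x : X => ramp m β t0 t1 (Q (x - xs n))) : ℝ) ≤
        (lipConst Q : ℝ) * m := by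
      have := NNReal.coe_le_coe.2 key2
      rwa [NNReal.coe_mul, Real.coe_toNNReal _ hm.le] at this
    have hm2 : m ≤ 2/r := by
      rw [hm_def, div_le_div_iff₀ (by positivity) hr]
      nlinarith
    have h4 : (lipConst Q : ℝ) * m ≤ (lipConst Q : ℝ) * (2/r) :=
      mul_le_mul_of_nonneg_left hm2 (lipConst Q).coe_nonneg
    have h5 : (lipConst Q : ℝ) * (2/r) = 2 * (lipConst Q : ℝ) / r := by ring
    linarith
  · intro n x
    exact ⟨B1 _, le_trans (B2 _) (by linarith)⟩
  · intro x
    obtain ⟨j, hj⟩ := hcover x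
    exact ⟨j, B3 _ hj⟩
  · intro n x hx
    exact B4 _ (by linarith [not_lt.1 hx])
  · intro n x hx
    have ht : 5*r ≤ Q (x - xs n) := by linarith [not_lt.1 hx]
    have hQd : HasFDerivAt Q (fderiv ℝ Q (x - xs n)) (x - xs n) :=
      (hQan _).differentiableAt.hasFDerivAt
    have hg : HasFDerivAt (fun y : X => Q (y - xs n)) (fderiv ℝ Q (x - xs n)) x := by
      have h2 : HasFDerivAt (fun y : X => y - xs n) (ContinuousLinearMap.id ℝ X) x :=
        (hasFDerivAt_id x).sub_const (xs n)
      simpa [Function.comp_def] using hQd.comp x h2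
    have hφ : HasFDerivAt (fun y : X => ramp m β t0 t1 (Q (y - xs n)))
        ((m * (sg (β * (t0 - Q (x - xs n))) - sg (β * (t1 - Q (x - xs n))))) •
          fderiv ℝ Q (x - xs n)) x :=
      (hasDerivAt_ramp m β t0 t1 (Q (x - xs n)) hβ.ne').comp_hasFDerivAt (f := fun y : X => Q (y - xs n)) x hg
    rw [hφ.fderiv, norm_smul, Real.norm_eq_abs]
    have hd := B5 _ ht
    have hfd : ‖fderiv ℝ Q (x - xs n)‖ ≤ (K:ℝ) := hQd.le_of_lipschitz hK
    have h6 : |m * (sg (β * (t0 - Q (x - xs n))) - sg (β * (t1 - Q (x - xs n))))| *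
        ‖fderiv ℝ Q (x - xs n)‖ ≤ (ε/((K:ℝ)+1)) * (K:ℝ) :=
      mul_le_mul hd hfd (norm_nonneg _) (by positivity)
    have h7 : (ε/((K:ℝ)+1)) * (K:ℝ) ≤ ε := by
      rw [div_mul_eq_mul_div, div_le_iff₀ (by positivity)]
      nlinarith
    linarith
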